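/- arXiv:2107.11106 — 2 statements merged into one kernel-verified Lean document; each statement's English description precedes it below -/
import Mathlib

section
/- Let κ > 0 and m̄ ∈ (0,1), and suppose 0 < c < 2√(1-m̄). Then there is no C² function n : ℝ → ℝ with the properties: n(y) > 0 for all y, n(y) → 0 as y → +∞, and n satisfies n'' + cn' + (1-n)n(1-m) = 0 where m : ℝ → ℝ is continuous, increasing, with m(y) → m̄ as y → +∞ and 0 < m(y) < m̄, 0 < n(y) < 1 for all y. -/
open Real Filter Set

lemma lin_bound (f f' : ℝ → ℝ) (hf : ∀ y, HasDerivAt f (f' y) y)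
    (a C : ℝ) (hC : ∀ y, a ≤ y → f' y ≤ C) :
    ∀ y, a ≤ y → f y ≤ f a + C * (y - a) := by
  intro y hy
  have hcont : Continuous f := by
    rw [continuous_iff_continuousAt]; exact fun x => (hf x).continuousAt
  have hd : ∀ x : ℝ, HasDerivAt (fun z => f z - C * z) (f' x - C) x := by
    intro x
    have h1 : HasDerivAt (fun z : ℝ => C * z) C x := by
      simpa using (hasDerivAt_id x).const_mul C
    exact (hf x).sub h1
  have h : AntitoneOn (fun z => f z - C * z) (Set.Ici a) := by
    apply antitoneOn_of_deriv_nonpos (convex_Ici a)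
    · exact (hcont.sub (continuous_const.mul continuous_id)).continuousOn
    · intro x _
      exact (hd x).differentiableAt.differentiableWithinAt
    · intro x hx
      rw [interior_Ici] at hx
      rw [(hd x).deriv]
      linarith [hC x hx.le]
  have := h (Set.self_mem_Ici) (Set.mem_Ici.2 hy) hy
  simp only at this
  linarith

theorem stmt_9 (κ c mbar : ℝ) (hκ : 0 < κ) (hm : mbar ∈ Set.Ioo (0 : ℝ) 1)
    (hc : 0 < c) (hc2 : c < 2 * Real.sqrt (1 - mbar))
    (n ndot nddot m : ℝ → ℝ)
    (hd1 : ∀ y, HasDerivAt n (ndot y) y)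
    (hd2 : ∀ y, HasDerivAt ndot (nddot y) y)
    (hode : ∀ y, nddot y + c * ndot y + (1 - n y) * n y * (1 - m y) = 0)
    (hmcont : Continuous m) (hmmono : Monotone m)
    (hmlim : Tendsto m atTop (nhds mbar))
    (hmrange : ∀ y, 0 < m y ∧ m y < mbar)
    (hnrange : ∀ y, 0 < n y ∧ n y < 1)
    (hnlim : Tendsto n atTop (nhds 0)) :
    False := by
  obtain ⟨hm0, hm1⟩ := hm
  set δ : ℝ := 1 - mbar - c ^ 2 / 4 with hδdef
  have hsq : c ^ 2 < 4 * (1 - mbar) := by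
    have h1 : (0 : ℝ) ≤ 1 - mbar := by linarith
    have h2 := Real.sq_sqrt h1
    nlinarith [Real.sqrt_nonneg (1 - mbar)]
  have hδ : 0 < δ := by simp only [hδdef]; linarith
  obtain ⟨Y, hY⟩ := eventually_atTop.1 ((tendsto_order.1 hnlim).2 (δ / 2) (by positivity))
  have hexp : ∀ y : ℝ, HasDerivAt (fun z => Real.exp (c / 2 * z))
      (c / 2 * Real.exp (c / 2 * y)) y := by
    intro y
    have h1 : HasDerivAt (fun z : ℝ => c / 2 * z) (c / 2) y := by
      simpa using (hasDerivAt_id y).const_mul (c / 2)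
    simpa [mul_comm] using h1.exp
  set w : ℝ → ℝ := fun y => Real.exp (c / 2 * y) * n y with hwdef
  set wdot : ℝ → ℝ := fun y => Real.exp (c / 2 * y) * (c / 2 * n y + ndot y) with hwddef
  set wddot : ℝ → ℝ :=
    fun y => Real.exp (c / 2 * y) * (c ^ 2 / 4 * n y + c * ndot y + nddot y) with hwdddef
  have hw : ∀ y, HasDerivAt w (wdot y) y := by
    intro y
    have h : HasDerivAt (fun z => Real.exp (c / 2 * z) * n z) _ y := (hexp y).mul (hd1 y)
    convert h using 1
    simp only [hwddef]; ring
  have hw2 : ∀ y, HasDerivAt wdot (wddot y) y := by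
    intro y
    have hg : HasDerivAt (fun z => c / 2 * n z + ndot z) (c / 2 * ndot y + nddot y) y :=
      ((hd1 y).const_mul (c / 2)).add (hd2 y)
    have h : HasDerivAt (fun z => Real.exp (c / 2 * z) * (c / 2 * n z + ndot z)) _ y := (hexp y).mul hg
    convert h using 1
    simp only [hwdddef]; ring
  have hwpos : ∀ y, 0 < w y := fun y => mul_pos (Real.exp_pos _) (hnrange y).1
  have hkey : ∀ y, Y ≤ y → wddot y ≤ -(δ / 2) * w y := by
    intro y hy
    obtain ⟨hn0, hn1⟩ := hnrange y
    obtain ⟨hm0y, hm1y⟩ := hmrange y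
    have hny := hY y hy
    have hid : c ^ 2 / 4 * n y + c * ndot y + nddot y
        = n y * (c ^ 2 / 4 - (1 - n y) * (1 - m y)) := by
      linear_combination hode y
    have hfac : c ^ 2 / 4 - (1 - n y) * (1 - m y) ≤ -(δ / 2) := by
      nlinarith [mul_nonneg (by linarith : (0:ℝ) ≤ 1 - n y) (by linarith : (0:ℝ) ≤ mbar - m y),
        mul_nonneg hn0.le (by linarith : (0:ℝ) ≤ mbar)]
    have heq : wddot y = w y * (c ^ 2 / 4 - (1 - n y) * (1 - m y)) := by
      simp only [hwdddef, hwdef, hid]; ring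
    rw [heq]
    calc w y * (c ^ 2 / 4 - (1 - n y) * (1 - m y)) ≤ w y * (-(δ / 2)) :=
          mul_le_mul_of_nonneg_left hfac (hwpos y).le
      _ = -(δ / 2) * w y := by ring
  -- Step A : wdot is nonnegative on [Y, ∞)
  have hwdotnn : ∀ y, Y ≤ y → 0 ≤ wdot y := by
    by_contra hcon
    push_neg at hcon
    obtain ⟨y0, hy0, hneg⟩ := hcon
    have hbd1 : ∀ z, y0 ≤ z → wdot z ≤ wdot y0 := by
      intro z hz
      have := lin_bound wdot wddot hw2 y0 0
        (fun z hz => by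
          have := hkey z (le_trans hy0 hz)
          nlinarith [hwpos z]) z hz
      linarith
    have hbd2 := lin_bound w wdot hw y0 (wdot y0) hbd1
    set z : ℝ := y0 + (w y0 + 1) / (-wdot y0) with hzdef
    have hpos : 0 < (w y0 + 1) / (-wdot y0) := by
      apply div_pos (by linarith [hwpos y0]) (by linarith)
    have hz : y0 ≤ z := by simp only [hzdef]; linarith
    have h3 := hbd2 z hz
    have hne : -wdot y0 ≠ 0 := ne_of_gt (by linarith)
    have h4 : wdot y0 * (z - y0) = -(w y0 + 1) := by
      simp only [hzdef]
      field_simp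
      rw [add_sub_cancel_left, mul_neg, ← mul_div_assoc, mul_div_cancel_left₀ _ hneg.ne]
    rw [h4] at h3
    linarith [hwpos z]
  -- Step B : w is bounded below by w Y on [Y, ∞)
  have hwlb : ∀ y, Y ≤ y → w Y ≤ w y := by
    intro y hy
    have := lin_bound (fun z => -w z) (fun z => -wdot z) (fun z => (hw z).neg) Y 0
      (fun z hz => neg_nonpos.2 (hwdotnn z hz)) y hy
    linarith
  -- Step C : derive contradiction
  have hB : 0 < δ / 2 * w Y := mul_pos (by linarith) (hwpos Y)
  have hbd3 := lin_bound wdot wddot hw2 Y (-(δ / 2 * w Y))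
    (fun z hz => by
      have h1 := hkey z hz
      have h2 := hwlb z hz
      nlinarith)
  set y1 : ℝ := Y + (wdot Y + 1) / (δ / 2 * w Y) with hy1def
  have hpos1 : 0 < (wdot Y + 1) / (δ / 2 * w Y) := by
    apply div_pos (by linarith [hwdotnn Y le_rfl]) hB
  have hy1 : Y ≤ y1 := by simp only [hy1def]; linarith
  have h5 := hbd3 y1 hy1
  have hne2 : (2 : ℝ) * (δ * w Y) ≠ 0 := by
    have := hwpos Y; positivity
  have h6 : -(δ / 2 * w Y) * (y1 - Y) = -(wdot Y + 1) := by
    simp only [hy1def]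
    field_simp
    rw [add_sub_cancel_left, ← mul_div_assoc, mul_div_cancel_left₀ _ (hwpos Y).ne']
  rw [h6] at h5
  linarith [hwdotnn y1 hy1]
end

section
/- Let κ > 0, c > 0, and suppose n, p, m : (-∞, y₀) → ℝ solve n' = p, p' = -cp - (1-n)n(1-m), m' = (κ/c)m(1-m)n, with n(y) > 0 for all y < y₀, n(y) → 1, p(y) → 0, m(y) → 0 as y → -∞, m(ȳ) > 0 for some ȳ, and p(y) < 0 for all y in a neighbourhood of -∞. If there exists y₁ < y₀ with p(y₁) = 0 and p(y) < 0 for all y < y₁, then 0 < n(y₁) < 1 and p'(y₁) = -(1-n(y₁)) n(y₁) (1-m(y₁)) < 0, which contradicts p(y) < 0 for y < y₁; hence p(y) < 0 for all y < y₀. -/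
open Real Filter Set

theorem stmt_19 (κ c y₀ : ℝ) (hκ : 0 < κ) (hc : 0 < c)
    (n p m : ℝ → ℝ)
    (hn' : ∀ y < y₀, HasDerivAt n (p y) y)
    (hp' : ∀ y < y₀, HasDerivAt p (-c * p y - (1 - n y) * n y * (1 - m y)) y)
    (hm' : ∀ y < y₀, HasDerivAt m ((κ / c) * m y * (1 - m y) * n y) y)
    (hnpos : ∀ y < y₀, 0 < n y)
    (hmrange : ∀ y < y₀, 0 < m y ∧ m y < 1)
    (hnlim : Tendsto n atBot (nhds 1))
    (hplim : Tendsto p atBot (nhds 0))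
    (hmlim : Tendsto m atBot (nhds 0))
    (hmbar : ∃ ybar < y₀, 0 < m ybar)
    (hpneg : ∃ Y < y₀, ∀ y < Y, p y < 0) :
    ∀ y < y₀, p y < 0 := by
  by_contra h
  push_neg at h
  obtain ⟨y₂, hy₂, hpy₂⟩ := h
  obtain ⟨Y, hY, hpY⟩ := hpneg
  have hYy₂ : Y ≤ y₂ := by
    by_contra hlt
    push_neg at hlt
    exact absurd hpy₂ (not_le.2 (hpY y₂ hlt))
  set S : Set ℝ := Icc Y y₂ ∩ p ⁻¹' (Ici 0) with hSdef
  have hcont : ContinuousOn p (Icc Y y₂) := fun x hx =>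
    ((hp' x (lt_of_le_of_lt hx.2 hy₂)).continuousAt).continuousWithinAt
  have hSclosed : IsClosed S :=
    hcont.preimage_isClosed_of_isClosed isClosed_Icc isClosed_Ici
  have hSne : S.Nonempty := ⟨y₂, ⟨hYy₂, le_refl _⟩, hpy₂⟩
  have hSbdd : BddBelow S := ⟨Y, fun x hx => hx.1.1⟩
  set y₁ := sInf S with hy₁def
  have hy₁S : y₁ ∈ S := hSclosed.csInf_mem hSne hSbdd
  have hy₁le : y₁ ≤ y₂ := hy₁S.1.2
  have hy₁lt : y₁ < y₀ := lt_of_le_of_lt hy₁le hy₂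
  -- p < 0 strictly to the left of y₁
  have hleft : ∀ y < y₁, p y < 0 := by
    intro y hy
    rcases lt_or_ge y Y with hyY | hyY
    · exact hpY y hyY
    · by_contra hge
      push_neg at hge
      have hyS : y ∈ S := ⟨⟨hyY, le_trans hy.le hy₁le⟩, hge⟩
      exact absurd (csInf_le hSbdd hyS) (not_le.2 hy)
  -- p y₁ = 0
  have hpy₁ : p y₁ = 0 := by
    have hle : p y₁ ≤ 0 := by
      have htd : Tendsto p (nhdsWithin y₁ (Iio y₁)) (nhds (p y₁)) :=
        ((hp' y₁ hy₁lt).continuousAt).continuousWithinAt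
      refine le_of_tendsto htd ?_
      filter_upwards [self_mem_nhdsWithin] with z hz
      exact (hleft z hz).le
    exact le_antisymm hle hy₁S.2
  -- n is strictly decreasing on Iic y₁
  have hnanti : StrictAntiOn n (Iic y₁) := by
    apply StrictAntiOn.mono ?_ (subset_refl _)
    apply strictAntiOn_of_deriv_neg (convex_Iic y₁)
    · intro x hx
      exact ((hn' x (lt_of_le_of_lt hx hy₁lt)).continuousAt).continuousWithinAt
    · intro x hx
      rw [interior_Iic] at hx
      rw [(hn' x (lt_trans hx hy₁lt)).deriv]
      exact hleft x hx
  have hn1 : n y₁ < 1 := by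
    have hy' : y₁ - 1 < y₁ := by linarith
    have h1 : n y₁ < n (y₁ - 1) :=
      hnanti (mem_Iic.2 hy'.le) (mem_Iic.2 le_rfl) hy'
    have h2 : n (y₁ - 1) ≤ 1 := by
      refine ge_of_tendsto hnlim ?_
      filter_upwards [eventually_le_atBot (y₁ - 1)] with z hz
      exact hnanti.antitoneOn (le_trans hz hy'.le) hy'.le hz
    linarith
  have hnp := hnpos y₁ hy₁lt
  obtain ⟨hm0, hm1⟩ := hmrange y₁ hy₁lt
  -- derivative of p at y₁ is negative
  have hdneg : -c * p y₁ - (1 - n y₁) * n y₁ * (1 - m y₁) < 0 := by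
    rw [hpy₁]
    have : 0 < (1 - n y₁) * n y₁ * (1 - m y₁) :=
      mul_pos (mul_pos (by linarith) hnp) (by linarith)
    linarith
  have hd := hp' y₁ hy₁lt
  rw [hasDerivAt_iff_tendsto_slope] at hd
  have hslope : ∀ᶠ z in nhdsWithin y₁ {y₁}ᶜ, slope p y₁ z < 0 :=
    hd.eventually (gt_mem_nhds hdneg)
  have hslope' : ∀ᶠ z in nhdsWithin y₁ (Iio y₁), slope p y₁ z < 0 :=
    hslope.filter_mono (nhdsWithin_mono _ (fun z hz => ne_of_lt hz))
  obtain ⟨z, hs, hz⟩ := (hslope'.and self_mem_nhdsWithin).exists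
  have hzlt : z < y₁ := hz
  rw [slope_def_field] at hs
  have hden : z - y₁ < 0 := by linarith
  have hnum : 0 < p z := by
    rw [hpy₁, sub_zero] at hs
    rcases div_neg_iff.mp hs with ⟨ha, hb⟩ | ⟨ha, hb⟩
    · exact ha
    · linarith
  exact absurd hnum (not_lt.2 (hleft z hzlt).le)
end
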